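/- Let q be a time-homogeneous conservative stable Q-function on a Borel space S with bounded rate q_x ≤ q̄ < ∞, and let w : S → [1,∞) satisfy ∫_S w(y) q(dy|x) ≤ ρ w(x) for all x, with ρ > 0. Let q^w be the w-transformed Q-function on S_δ = S ∪ {δ} (as defined via q^w(Γ|x) = ∫_Γ w(y)q(dy|x)/w(x) for x ∉ Γ, q^w({δ}|x) = ρ − ∫_S w(y)q(dy|x)/w(x), q^w(·|δ)=0), and let p_q and p_{q^w} be the respective Feller constructions. Then for all x ∈ S, 0 ≤ s ≤ t, and Γ ∈ B(S): p_{q^w}(s,x,t,Γ) = (e^{−ρ(t−s)}/w(x)) ∫_Γ w(y) p_q(s,x,t,dy). -/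

import Mathlib

open MeasureTheory
open scoped ENNReal
open ProbabilityTheory

/-- The Feller construction, as a measure, for a time-homogeneous conservative stable
Q-function: `qt x` is the off-diagonal jump measure `q̃(dy|x)` and `qx x = q_x`, with
`p^{(0)}(s,x,t,·) = e^{-q_x (t-s)} δ_x` and
`p^{(n+1)}(s,x,t,Γ) = ∫_s^t e^{-q_x (u-s)} ∫_S p^{(n)}(u,z,t,Γ) q̃(dz|x) du`. -/
noncomputable def fellerM {S : Type*} [MeasurableSpace S]
    (qt : S → Measure S) (qx : S → ℝ) : ℕ → ℝ → ℝ → S → Measure S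
  | 0 => fun s t x => ENNReal.ofReal (Real.exp (-(qx x) * (t - s))) • Measure.dirac x
  | (n+1) => fun s t x =>
      ((MeasureTheory.volume.restrict (Set.Ioc s t)).withDensity
          (fun u => ENNReal.ofReal (Real.exp (-(qx x) * (u - s))))).bind
        (fun u => (qt x).bind (fun z => fellerM qt qx n u t z))

section Aux

variable {S : Type*} [MeasurableSpace S]

lemma meas_lint_family {T : Type*} [MeasurableSpace T] (m : T → Measure S) (C : ℝ≥0∞)
    (hCfin : C < ∞) (hm : ∀ A : Set S, MeasurableSet A → Measurable fun a => m a A)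
    (hbd : ∀ a, m a Set.univ ≤ C) {f : T × S → ℝ≥0∞} (hf : Measurable f) :
    Measurable fun a => ∫⁻ z, f (a, z) ∂ m a := by
  let κ : Kernel T S := ⟨m, Measure.measurable_of_measurable_coe _ hm⟩
  have : IsFiniteKernel κ := ⟨⟨C, hCfin, hbd⟩⟩
  exact Measurable.lintegral_kernel_prod_right' (κ := κ) hf

lemma feller_succ_lintegral (qt : S → Measure S) (qx : S → ℝ) (C : ℝ≥0∞) (hCfin : C < ∞)
    (hbd : ∀ x, qt x Set.univ ≤ C) {n : ℕ} {t : ℝ}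
    (hmeas : Measurable (fun p : ℝ × S => fellerM qt qx n p.1 t p.2))
    {f : S → ℝ≥0∞} (hf : Measurable f) (s : ℝ) (x : S) :
    ∫⁻ y, f y ∂ fellerM qt qx (n+1) s t x
      = ∫⁻ u in Set.Ioc s t, ENNReal.ofReal (Real.exp (-(qx x) * (u - s)))
          * ∫⁻ z, (∫⁻ y, f y ∂ fellerM qt qx n u t z) ∂ qt x := by
  have hz : ∀ u : ℝ, Measurable fun z => fellerM qt qx n u t z := fun u =>
    hmeas.comp measurable_prodMk_left
  have hbm : Measurable fun u => (qt x).bind (fun z => fellerM qt qx n u t z) := by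
    apply Measure.measurable_of_measurable_coe
    intro A hA
    have h1 : (fun u => ((qt x).bind fun z => fellerM qt qx n u t z) A)
        = fun u => ∫⁻ z, fellerM qt qx n u t z A ∂ qt x :=
      funext fun u => Measure.bind_apply hA (hz u).aemeasurable
    rw [h1]
    exact meas_lint_family (fun _ : ℝ => qt x) C hCfin (fun _ _ => measurable_const)
      (fun _ => hbd x) ((Measure.measurable_coe hA).comp hmeas)
  have hIm : Measurable fun u => ∫⁻ z, (∫⁻ y, f y ∂ fellerM qt qx n u t z) ∂ qt x :=
    meas_lint_family (fun _ : ℝ => qt x) C hCfin (fun _ _ => measurable_const)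
      (fun _ => hbd x) ((Measure.measurable_lintegral hf).comp hmeas)
  have hg : Measurable fun u : ℝ => ENNReal.ofReal (Real.exp (-(qx x) * (u - s))) :=
    ENNReal.measurable_ofReal.comp (Real.measurable_exp.comp
      (measurable_const.mul (measurable_id.sub measurable_const)))
  have h2 : (fun u => ∫⁻ y, f y ∂ ((qt x).bind fun z => fellerM qt qx n u t z))
      = fun u => ∫⁻ z, (∫⁻ y, f y ∂ fellerM qt qx n u t z) ∂ qt x :=
    funext fun u => Measure.lintegral_bind (hz u).aemeasurable hf.aemeasurable
  show ∫⁻ y, f y ∂ (((MeasureTheory.volume.restrict (Set.Ioc s t)).withDensity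
          (fun u => ENNReal.ofReal (Real.exp (-(qx x) * (u - s))))).bind
        (fun u => (qt x).bind (fun z => fellerM qt qx n u t z))) = _
  rw [Measure.lintegral_bind hbm.aemeasurable hf.aemeasurable, h2, lintegral_withDensity_eq_lintegral_mul _ hg hIm]
  rfl

lemma feller_succ_apply (qt : S → Measure S) (qx : S → ℝ) (C : ℝ≥0∞) (hCfin : C < ∞)
    (hbd : ∀ x, qt x Set.univ ≤ C) {n : ℕ} {t : ℝ}
    (hmeas : Measurable (fun p : ℝ × S => fellerM qt qx n p.1 t p.2))
    {A : Set S} (hA : MeasurableSet A) (s : ℝ) (x : S) :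
    fellerM qt qx (n+1) s t x A
      = ∫⁻ u in Set.Ioc s t, ENNReal.ofReal (Real.exp (-(qx x) * (u - s)))
          * ∫⁻ z, fellerM qt qx n u t z A ∂ qt x := by
  have := feller_succ_lintegral qt qx C hCfin hbd hmeas
    (f := A.indicator 1) (measurable_one.indicator hA) s x
  simp_rw [lintegral_indicator_one hA] at this
  exact this

lemma feller_meas (qt : S → Measure S) (qx : S → ℝ) (C : ℝ≥0∞) (hCfin : C < ∞)
    (hqxm : Measurable qx)
    (hqtm : ∀ Γ : Set S, MeasurableSet Γ → Measurable fun x => qt x Γ)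
    (hbd : ∀ x, qt x Set.univ ≤ C) :
    ∀ (n : ℕ) (t : ℝ), Measurable (fun p : ℝ × S => fellerM qt qx n p.1 t p.2) := by
  intro n
  induction n with
  | zero =>
    intro t
    apply Measure.measurable_of_measurable_coe
    intro A hA
    have h1 : (fun p : ℝ × S => fellerM qt qx 0 p.1 t p.2 A)
        = fun p : ℝ × S => ENNReal.ofReal (Real.exp (-(qx p.2) * (t - p.1)))
            * A.indicator 1 p.2 := by
      funext p
      simp [fellerM, Measure.dirac_apply' _ hA]
    rw [h1]
    exact (ENNReal.measurable_ofReal.comp (Real.measurable_exp.comp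
      (((hqxm.comp measurable_snd).neg).mul (measurable_const.sub measurable_fst)))).mul
      ((measurable_one.indicator hA).comp measurable_snd)
  | succ n ih =>
    intro t
    apply Measure.measurable_of_measurable_coe
    intro A hA
    have hrw : (fun p : ℝ × S => fellerM qt qx (n+1) p.1 t p.2 A)
        = fun p : ℝ × S => ∫⁻ u, Set.indicator {q : (ℝ × S) × ℝ | q.2 ∈ Set.Ioc q.1.1 t}
            (fun q => ENNReal.ofReal (Real.exp (-(qx q.1.2) * (q.2 - q.1.1)))
              * ∫⁻ z, fellerM qt qx n q.2 t z A ∂ qt q.1.2) (p, u)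
            ∂ (volume : Measure ℝ) := by
      funext p
      rw [feller_succ_apply qt qx C hCfin hbd (ih t) hA p.1 p.2,
        ← lintegral_indicator measurableSet_Ioc]
      refine lintegral_congr fun u => ?_
      by_cases h : u ∈ Set.Ioc p.1 t
      · simp only [Set.indicator_of_mem h, Set.indicator_of_mem (by simpa using h :
          ((p, u) : (ℝ × S) × ℝ) ∈ {q : (ℝ × S) × ℝ | q.2 ∈ Set.Ioc q.1.1 t})]
      · simp only [Set.indicator_of_notMem h, Set.indicator_of_notMem (by simpa using h :
          ((p, u) : (ℝ × S) × ℝ) ∉ {q : (ℝ × S) × ℝ | q.2 ∈ Set.Ioc q.1.1 t})]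
    rw [hrw]
    apply Measurable.lintegral_prod_right'
    apply Measurable.indicator
    · exact (ENNReal.measurable_ofReal.comp (Real.measurable_exp.comp
        (((hqxm.comp (measurable_snd.comp measurable_fst)).neg).mul
          (measurable_snd.sub (measurable_fst.comp measurable_fst))))).mul
        (meas_lint_family (fun q : (ℝ × S) × ℝ => qt q.1.2) C hCfin
          (fun A' hA' => (hqtm A' hA').comp (measurable_snd.comp measurable_fst))
          (fun q => hbd q.1.2)
          ((Measure.measurable_coe hA).comp ((ih t).comp
            ((measurable_snd.comp measurable_fst).prodMk measurable_snd))))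
    · exact (measurableSet_lt (measurable_fst.comp measurable_fst) measurable_snd).inter
        (measurableSet_le measurable_snd measurable_const)

lemma feller_transform (qt : S → Measure S) (qx : S → ℝ) (w : S → ℝ) (ρ qbar : ℝ)
    (hρ : 0 < ρ) (hqbar : ∀ x, qx x ≤ qbar) (hq0 : ∀ x, 0 ≤ qx x)
    (hw : Measurable w) (hw1 : ∀ x, 1 ≤ w x) (hqxm : Measurable qx)
    (hqtm : ∀ Γ : Set S, MeasurableSet Γ → Measurable fun x => qt x Γ)
    (hbd : ∀ x, qt x Set.univ ≤ ENNReal.ofReal qbar)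
    (hdrift : ∀ x, (∫⁻ y, ENNReal.ofReal (w y) ∂ qt x)
      ≤ ENNReal.ofReal ((ρ + qx x) * w x)) :
    ∀ (n : ℕ) (t s : ℝ) (x : S), s ≤ t → ∀ Γ : Set S, MeasurableSet Γ →
      fellerM (fun x => (qt x).withDensity fun y => ENNReal.ofReal (w y / w x))
          (fun x => ρ + qx x) n s t x Γ
        = ENNReal.ofReal (Real.exp (-ρ * (t - s)) / w x)
            * ∫⁻ y in Γ, ENNReal.ofReal (w y) ∂ fellerM qt qx n s t x := by
  set qtw : S → Measure S :=
    fun x => (qt x).withDensity fun y => ENNReal.ofReal (w y / w x) with hqtw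
  set qxw : S → ℝ := fun x => ρ + qx x with hqxw
  have hwpos : ∀ z, 0 < w z := fun z => lt_of_lt_of_le one_pos (hw1 z)
  have hCfin : (ENNReal.ofReal qbar) < ∞ := ENNReal.ofReal_lt_top
  have hCwfin : (ENNReal.ofReal (ρ + qbar)) < ∞ := ENNReal.ofReal_lt_top
  have hqxwm : Measurable qxw := measurable_const.add hqxm
  have hqtwm : ∀ Γ : Set S, MeasurableSet Γ → Measurable fun x => qtw x Γ := by
    intro Γ hΓ
    have h1 : (fun x => qtw x Γ) = fun x => ∫⁻ y, (Set.univ ×ˢ Γ).indicator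
        (fun q : S × S => ENNReal.ofReal (w q.2 / w q.1)) (x, y) ∂ qt x := by
      funext x
      rw [hqtw]
      rw [withDensity_apply _ hΓ, ← lintegral_indicator hΓ]
      refine lintegral_congr fun y => ?_
      by_cases h : y ∈ Γ <;> simp [Set.indicator, h]
    rw [h1]
    exact meas_lint_family qt _ hCfin hqtm hbd
      ((ENNReal.measurable_ofReal.comp ((hw.comp measurable_snd).div
        (hw.comp measurable_fst))).indicator (MeasurableSet.univ.prod hΓ))
  have hbdw : ∀ x, qtw x Set.univ ≤ ENNReal.ofReal (ρ + qbar) := by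
    intro x
    have hwx := hwpos x
    rw [hqtw]
    rw [withDensity_apply _ MeasurableSet.univ, Measure.restrict_univ]
    have h1 : ∀ y, ENNReal.ofReal (w y / w x)
        = ENNReal.ofReal (w y) * ENNReal.ofReal (w x)⁻¹ := fun y => by
      rw [div_eq_mul_inv, ENNReal.ofReal_mul (le_of_lt (hwpos y))]
    simp_rw [h1]
    rw [lintegral_mul_const' _ _ ENNReal.ofReal_ne_top]
    calc (∫⁻ y, ENNReal.ofReal (w y) ∂ qt x) * ENNReal.ofReal (w x)⁻¹
        ≤ ENNReal.ofReal ((ρ + qx x) * w x) * ENNReal.ofReal (w x)⁻¹ :=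
          mul_le_mul_left (hdrift x) _
      _ = ENNReal.ofReal ((ρ + qx x) * w x * (w x)⁻¹) :=
          (ENNReal.ofReal_mul (mul_nonneg (by linarith [hq0 x]) hwx.le)).symm
      _ = ENNReal.ofReal (ρ + qx x) := by
          rw [mul_assoc, mul_inv_cancel₀ (ne_of_gt hwx), mul_one]
      _ ≤ ENNReal.ofReal (ρ + qbar) := ENNReal.ofReal_le_ofReal (by linarith [hqbar x])
  have hA := feller_meas qt qx _ hCfin hqxm hqtm hbd
  have hAw := feller_meas qtw qxw _ hCwfin hqxwm hqtwm hbdw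
  intro n
  induction n with
  | zero =>
    intro t s x hst Γ hΓ
    classical
    have hwx := hwpos x
    have hwne : w x ≠ 0 := ne_of_gt hwx
    show (ENNReal.ofReal (Real.exp (-(qxw x) * (t - s))) • Measure.dirac x) Γ = _
    rw [Measure.smul_apply, smul_eq_mul, Measure.dirac_apply' _ hΓ]
    have hR : ∫⁻ y in Γ, ENNReal.ofReal (w y) ∂ fellerM qt qx 0 s t x
        = ENNReal.ofReal (Real.exp (-(qx x) * (t - s)))
            * (if x ∈ Γ then ENNReal.ofReal (w x) else 0) := by
      show ∫⁻ y in Γ, ENNReal.ofReal (w y)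
          ∂ ((ENNReal.ofReal (Real.exp (-(qx x) * (t - s)))) • Measure.dirac x) = _
      rw [Measure.restrict_smul, lintegral_smul_measure,
        setLIntegral_dirac' (f := fun y => ENNReal.ofReal (w y))
          (ENNReal.measurable_ofReal.comp hw) hΓ, smul_eq_mul]
    rw [hR]
    by_cases hx : x ∈ Γ
    · rw [Set.indicator_of_mem hx, if_pos hx, Pi.one_apply, mul_one,
        ← ENNReal.ofReal_mul (Real.exp_nonneg _),
        ← ENNReal.ofReal_mul (div_nonneg (Real.exp_nonneg _) hwx.le)]
      congr 1
      have h2 : Real.exp (-ρ * (t - s)) / w x * (Real.exp (-(qx x) * (t - s)) * w x)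
          = Real.exp (-ρ * (t - s)) * Real.exp (-(qx x) * (t - s)) := by
        field_simp
      rw [h2, ← Real.exp_add]
      simp only [hqxw]
      congr 1
      ring
    · rw [Set.indicator_of_notMem hx, if_neg hx, mul_zero, mul_zero, mul_zero]
  | succ n ih =>
    intro t s x hst Γ hΓ
    have hwx := hwpos x
    have hwne : w x ≠ 0 := ne_of_gt hwx
    have hind : Measurable (Γ.indicator fun y => ENNReal.ofReal (w y)) :=
      (ENNReal.measurable_ofReal.comp hw).indicator hΓ
    have hRHS : ∫⁻ y in Γ, ENNReal.ofReal (w y) ∂ fellerM qt qx (n+1) s t x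
        = ∫⁻ u in Set.Ioc s t, ENNReal.ofReal (Real.exp (-(qx x) * (u - s)))
            * ∫⁻ z, (∫⁻ y, Γ.indicator (fun y => ENNReal.ofReal (w y)) y
                ∂ fellerM qt qx n u t z) ∂ qt x := by
      rw [← lintegral_indicator hΓ,
        feller_succ_lintegral qt qx _ hCfin hbd (hA n t) hind s x]
    have key : ∀ u ∈ Set.Ioc s t,
        ENNReal.ofReal (Real.exp (-(qxw x) * (u - s)))
            * ∫⁻ z, fellerM qtw qxw n u t z Γ ∂ qtw x
        = ENNReal.ofReal (Real.exp (-ρ * (t - s)) / w x)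
            * (ENNReal.ofReal (Real.exp (-(qx x) * (u - s)))
              * ∫⁻ z, (∫⁻ y, Γ.indicator (fun y => ENNReal.ofReal (w y)) y
                  ∂ fellerM qt qx n u t z) ∂ qt x) := by
      intro u hu
      have hinm : Measurable fun z => fellerM qtw qxw n u t z Γ :=
        (Measure.measurable_coe hΓ).comp ((hAw n t).comp measurable_prodMk_left)
      have hdens : Measurable fun z => ENNReal.ofReal (w z / w x) :=
        ENNReal.measurable_ofReal.comp (hw.div measurable_const)
      have hGzm : Measurable fun z => ∫⁻ y, Γ.indicator (fun y => ENNReal.ofReal (w y)) y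
          ∂ fellerM qt qx n u t z :=
        (Measure.measurable_lintegral hind).comp ((hA n t).comp measurable_prodMk_left)
      have hstep : ∫⁻ z, fellerM qtw qxw n u t z Γ ∂ qtw x
          = ∫⁻ z, ENNReal.ofReal (w z / w x) * fellerM qtw qxw n u t z Γ ∂ qt x := by
        show ∫⁻ z, fellerM qtw qxw n u t z Γ
            ∂ ((qt x).withDensity fun y => ENNReal.ofReal (w y / w x)) = _
        rw [lintegral_withDensity_eq_lintegral_mul _ hdens hinm]
        rfl
      rw [hstep]
      have hpt : ∀ z, ENNReal.ofReal (w z / w x) * fellerM qtw qxw n u t z Γ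
          = ENNReal.ofReal (Real.exp (-ρ * (t - u)) / w x)
              * ∫⁻ y, Γ.indicator (fun y => ENNReal.ofReal (w y)) y
                  ∂ fellerM qt qx n u t z := by
        intro z
        have hz0 : w z ≠ 0 := ne_of_gt (hwpos z)
        rw [ih t u z hu.2 Γ hΓ, ← mul_assoc,
          ← ENNReal.ofReal_mul (div_nonneg (hwpos z).le hwx.le), lintegral_indicator hΓ]
        have harg : w z / w x * (Real.exp (-ρ * (t - u)) / w z)
            = Real.exp (-ρ * (t - u)) / w x := by
          field_simp
        rw [harg]
      rw [lintegral_congr hpt, lintegral_const_mul _ hGzm, ← mul_assoc, ← mul_assoc]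
      congr 1
      rw [← ENNReal.ofReal_mul (Real.exp_nonneg _),
        ← ENNReal.ofReal_mul (div_nonneg (Real.exp_nonneg _) hwx.le)]
      congr 1
      simp only [hqxw]
      have h1 : Real.exp (-(ρ + qx x) * (u - s)) * (Real.exp (-ρ * (t - u)) / w x)
          = Real.exp (-(ρ + qx x) * (u - s) + -ρ * (t - u)) / w x := by
        rw [Real.exp_add]
        ring
      have h2 : Real.exp (-ρ * (t - s)) / w x * Real.exp (-(qx x) * (u - s))
          = Real.exp (-ρ * (t - s) + -(qx x) * (u - s)) / w x := by
        rw [Real.exp_add]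
        ring
      rw [h1, h2]
      congr 2
      ring
    have hFm : Measurable fun u : ℝ => ENNReal.ofReal (Real.exp (-(qx x) * (u - s)))
        * ∫⁻ z, (∫⁻ y, Γ.indicator (fun y => ENNReal.ofReal (w y)) y
            ∂ fellerM qt qx n u t z) ∂ qt x :=
      (ENNReal.measurable_ofReal.comp (Real.measurable_exp.comp
        (measurable_const.mul (measurable_id.sub measurable_const)))).mul
        (meas_lint_family (fun _ : ℝ => qt x) _ hCfin (fun _ _ => measurable_const)
          (fun _ => hbd x) ((Measure.measurable_lintegral hind).comp (hA n t)))
    calc fellerM qtw qxw (n+1) s t x Γ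
        = ∫⁻ u in Set.Ioc s t, ENNReal.ofReal (Real.exp (-(qxw x) * (u - s)))
            * ∫⁻ z, fellerM qtw qxw n u t z Γ ∂ qtw x :=
          feller_succ_apply qtw qxw _ hCwfin hbdw (hAw n t) hΓ s x
      _ = ∫⁻ u in Set.Ioc s t, ENNReal.ofReal (Real.exp (-ρ * (t - s)) / w x)
            * (ENNReal.ofReal (Real.exp (-(qx x) * (u - s)))
              * ∫⁻ z, (∫⁻ y, Γ.indicator (fun y => ENNReal.ofReal (w y)) y
                  ∂ fellerM qt qx n u t z) ∂ qt x) :=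
          setLIntegral_congr_fun measurableSet_Ioc key
      _ = ENNReal.ofReal (Real.exp (-ρ * (t - s)) / w x)
            * ∫⁻ u in Set.Ioc s t, ENNReal.ofReal (Real.exp (-(qx x) * (u - s)))
              * ∫⁻ z, (∫⁻ y, Γ.indicator (fun y => ENNReal.ofReal (w y)) y
                  ∂ fellerM qt qx n u t z) ∂ qt x :=
          lintegral_const_mul _ hFm
      _ = ENNReal.ofReal (Real.exp (-ρ * (t - s)) / w x)
            * ∫⁻ y in Γ, ENNReal.ofReal (w y) ∂ fellerM qt qx (n+1) s t x := by
          rw [hRHS]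


end Aux

/-- for a time-homogeneous conservative stable Q-function with bounded rate
and a drift function `w ≥ 1` with `∫_S w dq ≤ ρ w` (equivalently `∫ w dq̃ ≤ (ρ+q_x) w(x)`),
the Feller transition functions of `q` and of the w-transformed Q-function `q^w`
(off-diagonal part `q̃^w(dy|x) = (w(y)/w(x)) q̃(dy|x)`, rate `q^w_x = ρ + q_x`) satisfy
`p_{q^w}(s,x,t,Γ) = (e^{-ρ(t-s)}/w(x)) ∫_Γ w(y) p_q(s,x,t,dy)` for all `Γ ∈ B(S)`. -/
theorem stmt10 {S : Type*} [MeasurableSpace S]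
    (qt : S → Measure S) (qx : S → ℝ) (w : S → ℝ) (ρ qbar : ℝ)
    (hρ : 0 < ρ) (hqbar : ∀ x, qx x ≤ qbar) (hq0 : ∀ x, 0 ≤ qx x)
    (hdiag : ∀ x, qt x {x} = 0)
    (hcons : ∀ x, qt x Set.univ = ENNReal.ofReal (qx x))
    (hw : Measurable w) (hw1 : ∀ x, 1 ≤ w x) (hqxm : Measurable qx)
    (hqtm : ∀ Γ : Set S, MeasurableSet Γ → Measurable fun x => qt x Γ)
    (hdrift : ∀ x, (∫⁻ y, ENNReal.ofReal (w y) ∂ qt x)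
      ≤ ENNReal.ofReal ((ρ + qx x) * w x)) :
    ∀ (x : S) (s t : ℝ), s ≤ t → ∀ Γ : Set S, MeasurableSet Γ →
      (Measure.sum fun n : ℕ =>
          fellerM (fun x => (qt x).withDensity fun y => ENNReal.ofReal (w y / w x))
            (fun x => ρ + qx x) n s t x) Γ
        = ENNReal.ofReal (Real.exp (-ρ * (t - s)) / w x)
            * ∫⁻ y in Γ, ENNReal.ofReal (w y)
                ∂ (Measure.sum fun n : ℕ => fellerM qt qx n s t x) := by
  intro x s t hst Γ hΓ
  have hbd : ∀ x, qt x Set.univ ≤ ENNReal.ofReal qbar := fun x => by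
    rw [hcons x]; exact ENNReal.ofReal_le_ofReal (hqbar x)
  have key := feller_transform qt qx w ρ qbar hρ hqbar hq0 hw hw1 hqxm hqtm hbd hdrift
  rw [Measure.sum_apply _ hΓ]
  have hsum : ∫⁻ y in Γ, ENNReal.ofReal (w y)
        ∂ (Measure.sum fun n : ℕ => fellerM qt qx n s t x)
      = ∑' n : ℕ, ∫⁻ y in Γ, ENNReal.ofReal (w y) ∂ fellerM qt qx n s t x := by
    rw [Measure.restrict_sum _ hΓ, lintegral_sum_measure]
  rw [hsum, ← ENNReal.tsum_mul_left]
  exact tsum_congr fun n => key n t s x hst Γ hΓ
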